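/- Consider the discrete weighted stochastic block model with two communities A and B of size n (within-community distribution p_n, between-community distribution q_n on {0, ..., L}, all edge weights independent). Let d_n(ℓ) = log(p_n(ℓ)/q_n(ℓ)), let M be a constant with M ≥ max_ℓ d_n(ℓ) for all n, and for a node i and a vertex set H let S(i, H) = Σ_{j ∈ H, j ≠ i} d_n(w_{ij}). Define the events F = {the maximum likelihood estimator fails}, F_A = {∃ i ∈ A : S(i, A \ {i}) < S(i, B) − M}, and F_B = {∃ j ∈ B : S(j, B \ {j}) < S(j, A) − M}. If P(F_A) ≥ 2/3, then P(F) ≥ 1/3. -/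

import Mathlib

/-!
STATEMENT 14: In the discrete weighted stochastic block model with two communities `A`,
`B` of size `n` over the alphabet `{0, …, L}`, with `d_n(ℓ) = log(p_n(ℓ)/q_n(ℓ))`,
`M ≥ max_ℓ d_n(ℓ)`, and `S(i, H) = ∑_{j ∈ H, j ≠ i} d_n(w_ij)`: if
`P(F_A) ≥ 2/3`, where `F_A = {∃ i ∈ A : S(i, A \ {i}) < S(i, B) − M}`, then the
maximum likelihood estimator fails with probability at least `1/3`.
-/

open MeasureTheory Filter
open scoped ENNReal

namespace SBM14

/-- Real mass function on the color alphabet `{0, …, L}` with parameter vector `c`. -/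
noncomputable def mass (L : ℕ) (c : Fin L → ℝ) (n : ℕ) : Fin (L + 1) → ℝ :=
  Fin.cases (1 - (∑ j, c j) * Real.log n / n) fun j => c j * Real.log n / n

/-- The corresponding distribution on the color alphabet. -/
noncomputable def colDist (L : ℕ) (c : Fin L → ℝ) (n : ℕ) : Measure (Fin (L + 1)) :=
  ∑ ℓ : Fin (L + 1), ENNReal.ofReal (mass L c n ℓ) • Measure.dirac ℓ

/-- Edges of the complete graph on the `2 n` vertices. -/
abbrev Edge (n : ℕ) := {e : Fin (2 * n) × Fin (2 * n) // e.1 < e.2}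

/-- The ground-truth community assignment. -/
def truth (n : ℕ) (i : Fin (2 * n)) : Bool := decide (i.val < n)

/-- The first community `A`. -/
def comA (n : ℕ) : Finset (Fin (2 * n)) := Finset.univ.filter fun i => i.val < n

/-- The second community `B`. -/
def comB (n : ℕ) : Finset (Fin (2 * n)) := Finset.univ.filter fun i => ¬ i.val < n

/-- Distribution of the color of one edge. -/
noncomputable def edgeMeasure (n L : ℕ) (a b : Fin L → ℝ) (e : Edge n) :
    Measure (Fin (L + 1)) :=
  if truth n e.1.1 = truth n e.1.2 then colDist L a n else colDist L b n

/-- The law of the colored random graph: all edge colors independent. -/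
noncomputable def sbm (n L : ℕ) (a b : Fin L → ℝ) : Measure (Edge n → Fin (L + 1)) :=
  Measure.pi (edgeMeasure n L a b)

/-- The color of the (unordered) edge `{i, j}`. -/
def wfun {n : ℕ} {L : ℕ} (w : Edge n → Fin (L + 1)) (i j : Fin (2 * n)) : Fin (L + 1) :=
  if h : i < j then w ⟨(i, j), h⟩ else if h' : j < i then w ⟨(j, i), h'⟩ else 0

/-- Likelihood of the observed colors `w` under the assignment `σ`. -/
noncomputable def likelihood (n L : ℕ) (a b : Fin L → ℝ) (σ : Fin (2 * n) → Bool)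
    (w : Edge n → Fin (L + 1)) : ℝ≥0∞ :=
  ∏ e : Edge n,
    if σ e.1.1 = σ e.1.2 then ENNReal.ofReal (mass L a n (w e))
    else ENNReal.ofReal (mass L b n (w e))

/-- A community assignment is balanced if each community has exactly `n` nodes. -/
def balanced (n : ℕ) (σ : Fin (2 * n) → Bool) : Prop :=
  (Finset.univ.filter fun i => σ i = true).card = n

/-- `σ` coincides with the true partition, up to swapping the two labels. -/
def equivTruth (n : ℕ) (σ : Fin (2 * n) → Bool) : Prop :=
  σ = truth n ∨ σ = fun i => !(truth n i)

/-- The log-likelihood ratio `d_n(ℓ) = log (p_n(ℓ) / q_n(ℓ))` of a single color. -/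
noncomputable def d (n L : ℕ) (a b : Fin L → ℝ) (ℓ : Fin (L + 1)) : ℝ :=
  Real.log (mass L a n ℓ / mass L b n ℓ)

/-- `S(i, H) = ∑_{j ∈ H, j ≠ i} d_n(w_ij)`. -/
noncomputable def S (n L : ℕ) (a b : Fin L → ℝ) (w : Edge n → Fin (L + 1))
    (i : Fin (2 * n)) (H : Finset (Fin (2 * n))) : ℝ :=
  ∑ j ∈ H.erase i, d n L a b (wfun w i j)

/-- Failure event of maximum likelihood: some balanced assignment not coinciding with
the truth is strictly more likely than the truth. -/
def failEvent (n L : ℕ) (a b : Fin L → ℝ) : Set (Edge n → Fin (L + 1)) :=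
  {w | ∃ σ, balanced n σ ∧ ¬ equivTruth n σ ∧
    likelihood n L a b (truth n) w < likelihood n L a b σ w}

/-- The event `F_A`: some node of `A` is better connected to `B` than to `A`. -/
def eventFA (n L : ℕ) (a b : Fin L → ℝ) (M : ℝ) : Set (Edge n → Fin (L + 1)) :=
  {w | ∃ i ∈ comA n, S n L a b w i ((comA n).erase i) < S n L a b w i (comB n) - M}


/-! ### Auxiliary machinery -/

section Aux

variable (n L : ℕ) (a b : Fin L → ℝ)

/-- swap the two communities -/
def rho (i : Fin (2 * n)) : Fin (2 * n) :=
  ⟨if i.val < n then i.val + n else i.val - n, by have := i.isLt; split <;> omega⟩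

lemma rho_invol : Function.Involutive (rho n) := by
  intro i
  have h := i.isLt
  apply Fin.ext
  simp only [rho]
  split <;> split <;> omega

lemma rho_inj : Function.Injective (rho n) := (rho_invol n).injective

lemma truth_rho (i : Fin (2 * n)) : truth n (rho n i) = !truth n i := by
  have h := i.isLt
  simp only [truth, rho]
  by_cases hi : i.val < n <;> simp [hi] <;> omega

/-- sorted pair as an edge -/
def sortPair (i j : Fin (2 * n)) (h : i ≠ j) : Edge n :=
  if hl : i < j then ⟨(i, j), hl⟩ else ⟨(j, i), (h.lt_or_gt.resolve_left hl)⟩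

lemma sortPair_pos {i j : Fin (2 * n)} (h : i ≠ j) (hl : i < j) :
    sortPair n i j h = ⟨(i, j), hl⟩ := dif_pos hl

lemma sortPair_neg {i j : Fin (2 * n)} (h : i ≠ j) (hl : j < i) :
    sortPair n i j h = ⟨(j, i), hl⟩ := dif_neg (asymm hl)

lemma sortPair_congr {i j i' j' : Fin (2 * n)} (h : i ≠ j) (h' : i' ≠ j')
    (hi : i = i') (hj : j = j') : sortPair n i j h = sortPair n i' j' h' := by
  subst hi; subst hj; rfl

lemma sortPair_comm (i j : Fin (2 * n)) (h : i ≠ j) :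
    sortPair n i j h = sortPair n j i h.symm := by
  rcases h.lt_or_gt with hl | hl
  · rw [sortPair_pos n h hl, sortPair_neg n h.symm hl]
  · rw [sortPair_neg n h hl, sortPair_pos n h.symm hl]

lemma wfun_sortPair {w : Edge n → Fin (L + 1)} (i j : Fin (2 * n)) (h : i ≠ j) :
    wfun w i j = w (sortPair n i j h) := by
  unfold wfun
  rcases h.lt_or_gt with hl | hl
  · rw [dif_pos hl, sortPair_pos n h hl]
  · rw [dif_neg (asymm hl), dif_pos hl, sortPair_neg n h hl]

lemma wfun_comm {w : Edge n → Fin (L + 1)} (i j : Fin (2 * n)) :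
    wfun w i j = wfun w j i := by
  by_cases h : i = j
  · rw [h]
  · rw [wfun_sortPair n L i j h, wfun_sortPair n L j i (Ne.symm h), sortPair_comm]

lemma wfun_self {w : Edge n → Fin (L + 1)} (i : Fin (2 * n)) : wfun w i i = 0 := by
  unfold wfun
  rw [dif_neg (lt_irrefl i), dif_neg (lt_irrefl i)]

lemma wfun_edge {w : Edge n → Fin (L + 1)} (e : Edge n) : wfun w e.1.1 e.1.2 = w e := by
  unfold wfun
  rw [dif_pos e.2]

/-- the edge involution induced by `rho` -/
def edgeFlip (e : Edge n) : Edge n :=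
  sortPair n (rho n e.1.1) (rho n e.1.2) (fun hc => absurd (rho_inj n hc) (ne_of_lt e.2))

lemma edgeFlip_sortPair (i j : Fin (2 * n)) (h : i ≠ j) :
    edgeFlip n (sortPair n i j h) =
      sortPair n (rho n i) (rho n j) (fun hc => h (rho_inj n hc)) := by
  rcases h.lt_or_gt with hl | hl
  · rw [sortPair_pos n h hl]
    exact sortPair_congr n _ _ rfl rfl
  · rw [sortPair_neg n h hl]
    exact (sortPair_comm n (rho n j) (rho n i) _)

lemma edge_eq_sortPair (e : Edge n) : e = sortPair n e.1.1 e.1.2 (ne_of_lt e.2) := by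
  rw [sortPair_pos n _ e.2]

lemma edgeFlip_invol : Function.Involutive (edgeFlip n) := by
  intro e
  rw [edge_eq_sortPair n e, edgeFlip_sortPair, edgeFlip_sortPair]
  exact sortPair_congr n _ _ (rho_invol n _) (rho_invol n _)

/-- the permutation of edges induced by `rho` -/
def edgePerm : Equiv.Perm (Edge n) := (edgeFlip_invol n).toPerm

lemma edgeMeasure_comm (i j : Fin (2 * n)) (h : i ≠ j) :
    edgeMeasure n L a b (sortPair n i j h) =
      if truth n i = truth n j then colDist L a n else colDist L b n := by
  rcases h.lt_or_gt with hl | hl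
  · rw [sortPair_pos n h hl]; rfl
  · rw [sortPair_neg n h hl]
    show (if truth n j = truth n i then _ else _) = _
    by_cases ht : truth n i = truth n j
    · rw [if_pos ht.symm, if_pos ht]
    · rw [if_neg (Ne.symm ht), if_neg ht]

lemma edgeMeasure_flip (e : Edge n) :
    edgeMeasure n L a b (edgeFlip n e) = edgeMeasure n L a b e := by
  rw [edge_eq_sortPair n e, edgeFlip_sortPair, edgeMeasure_comm, edgeMeasure_comm,
    truth_rho, truth_rho]
  cases truth n e.1.1 <;> cases truth n e.1.2 <;> simp

end Aux


section Prob

variable {n L : ℕ} {a b : Fin L → ℝ}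

lemma mass_pos {c : Fin L → ℝ} (hc : ∀ ℓ, 0 < c ℓ) (hn : 2 ≤ n)
    (hu : (∑ ℓ, c ℓ) * Real.log n < n) (ℓ : Fin (L + 1)) : 0 < mass L c n ℓ := by
  have hn0 : (0:ℝ) < n := by positivity
  have hlog : 0 < Real.log n := Real.log_pos (by exact_mod_cast hn)
  induction ℓ using Fin.cases with
  | zero => simp only [mass, Fin.cases_zero]; rw [sub_pos, div_lt_one hn0]; exact hu
  | succ j => simp only [mass, Fin.cases_succ]; exact div_pos (mul_pos (hc j) hlog) hn0

lemma mass_nonneg {c : Fin L → ℝ} (hc : ∀ ℓ, 0 < c ℓ) (hn : 1 ≤ n)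
    (hu : (∑ ℓ, c ℓ) * Real.log n < n) (ℓ : Fin (L + 1)) : 0 ≤ mass L c n ℓ := by
  have hn0 : (0:ℝ) < n := by positivity
  have hlog : 0 ≤ Real.log n := Real.log_natCast_nonneg n
  induction ℓ using Fin.cases with
  | zero => simp only [mass, Fin.cases_zero]; rw [sub_nonneg, div_le_one hn0]; exact hu.le
  | succ j => simp only [mass, Fin.cases_succ];
              exact div_nonneg (mul_nonneg (hc j).le hlog) hn0.le

lemma mass_sum (c : Fin L → ℝ) : ∑ ℓ, mass L c n ℓ = 1 := by
  rw [Fin.sum_univ_succ]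
  simp only [mass, Fin.cases_zero, Fin.cases_succ]
  rw [← Finset.sum_div, ← Finset.sum_mul]
  ring

lemma colDist_prob {c : Fin L → ℝ} (hc : ∀ ℓ, 0 < c ℓ) (hn : 1 ≤ n)
    (hu : (∑ ℓ, c ℓ) * Real.log n < n) : IsProbabilityMeasure (colDist L c n) := by
  constructor
  simp only [colDist, Measure.coe_finset_sum, Finset.sum_apply, Measure.smul_apply,
    Measure.dirac_apply_of_mem (Set.mem_univ _), smul_eq_mul, mul_one]
  rw [← ENNReal.ofReal_sum_of_nonneg (fun i _ => mass_nonneg hc hn hu i), mass_sum,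
    ENNReal.ofReal_one]

lemma sbm_prob (ha : ∀ ℓ, 0 < a ℓ) (hb : ∀ ℓ, 0 < b ℓ) (hn : 1 ≤ n)
    (hu : (∑ ℓ, a ℓ) * Real.log n < n) (hv : (∑ ℓ, b ℓ) * Real.log n < n) :
    IsProbabilityMeasure (sbm n L a b) := by
  haveI : ∀ e : Edge n, IsProbabilityMeasure (edgeMeasure n L a b e) := by
    intro e
    unfold edgeMeasure
    split
    · exact colDist_prob ha hn hu
    · exact colDist_prob hb hn hv
  unfold sbm
  infer_instance

lemma all_measurable (s : Set (Edge n → Fin (L + 1))) : MeasurableSet s := by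
  have : Countable (Edge n → Fin (L + 1)) := Countable.of_equiv _ (Equiv.refl _)
  exact s.to_countable.measurableSet

end Prob


/-- The event `F_B`, mirror image of `F_A`. -/
def eventFB (n L : ℕ) (a b : Fin L → ℝ) (M : ℝ) : Set (Edge n → Fin (L + 1)) :=
  {w | ∃ j ∈ comB n, S n L a b w j ((comB n).erase j) < S n L a b w j (comA n) - M}

section Symm

variable {n L : ℕ} {a b : Fin L → ℝ}

lemma mem_comA {i : Fin (2 * n)} : i ∈ comA n ↔ truth n i = true := by
  simp [comA, truth, Finset.mem_filter]

lemma mem_comB {i : Fin (2 * n)} : i ∈ comB n ↔ truth n i = false := by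
  simp [comB, truth, Finset.mem_filter]

lemma image_comA : (comA n).image (rho n) = comB n := by
  ext x
  simp only [Finset.mem_image]
  constructor
  · rintro ⟨y, hy, rfl⟩
    rw [mem_comB, truth_rho, mem_comA.mp hy]
    rfl
  · intro hx
    refine ⟨rho n x, ?_, rho_invol n x⟩
    rw [mem_comA, truth_rho, mem_comB.mp hx]
    rfl

lemma image_comB : (comB n).image (rho n) = comA n := by
  ext x
  simp only [Finset.mem_image]
  constructor
  · rintro ⟨y, hy, rfl⟩
    rw [mem_comA, truth_rho, mem_comB.mp hy]
    rfl
  · intro hx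
    refine ⟨rho n x, ?_, rho_invol n x⟩
    rw [mem_comB, truth_rho, mem_comA.mp hx]
    rfl

/-- The transformation of colorings induced by the community swap. -/
noncomputable def Tmap (n L : ℕ) : (Edge n → Fin (L + 1)) ≃ᵐ (Edge n → Fin (L + 1)) :=
  MeasurableEquiv.piCongrLeft (fun _ : Edge n => Fin (L + 1)) (edgePerm n)

lemma Tmap_apply (w : Edge n → Fin (L + 1)) (e : Edge n) :
    Tmap n L w e = w (edgeFlip n e) := by
  have h1 : e = edgePerm n (edgeFlip n e) := (edgeFlip_invol n e).symm
  conv_lhs => rw [h1]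
  rw [Tmap]
  rw [MeasurableEquiv.coe_piCongrLeft]
  exact Equiv.piCongrLeft_apply_apply _ _ _ _

lemma wfun_Tmap (w : Edge n → Fin (L + 1)) (i j : Fin (2 * n)) :
    wfun (Tmap n L w) i j = wfun w (rho n i) (rho n j) := by
  by_cases h : i = j
  · rw [h, wfun_self, wfun_self]
  · rw [wfun_sortPair n L i j h,
      wfun_sortPair n L (rho n i) (rho n j) (fun hc => h (rho_inj n hc)),
      Tmap_apply, edgeFlip_sortPair]

lemma S_Tmap (w : Edge n → Fin (L + 1)) (i : Fin (2 * n)) (H : Finset (Fin (2 * n))) :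
    S n L a b (Tmap n L w) i H = S n L a b w (rho n i) (H.image (rho n)) := by
  unfold S
  rw [← Finset.image_erase (rho_inj n),
    Finset.sum_image (fun x _ y _ h => rho_inj n h)]
  exact Finset.sum_congr rfl fun j _ => by rw [wfun_Tmap]

lemma Tmap_preimage_FA (M : ℝ) :
    Tmap n L ⁻¹' eventFA n L a b M = eventFB n L a b M := by
  ext w
  simp only [Set.mem_preimage, eventFA, eventFB, Set.mem_setOf_eq]
  constructor
  · rintro ⟨i, hi, hlt⟩
    refine ⟨rho n i, ?_, ?_⟩
    · rw [← image_comA]; exact Finset.mem_image_of_mem _ hi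
    · rw [S_Tmap, S_Tmap, image_comB, Finset.image_erase (rho_inj n), image_comA] at hlt
      exact hlt
  · rintro ⟨j, hj, hlt⟩
    refine ⟨rho n j, ?_, ?_⟩
    · rw [← image_comB]; exact Finset.mem_image_of_mem _ hj
    · rw [S_Tmap, S_Tmap, image_comB, Finset.image_erase (rho_inj n), image_comA,
        rho_invol n j]
      exact hlt

lemma measure_FB_eq_FA (ha : ∀ ℓ, 0 < a ℓ) (hb : ∀ ℓ, 0 < b ℓ) (hn : 1 ≤ n)
    (hu : (∑ ℓ, a ℓ) * Real.log n < n) (hv : (∑ ℓ, b ℓ) * Real.log n < n) (M : ℝ) :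
    sbm n L a b (eventFB n L a b M) = sbm n L a b (eventFA n L a b M) := by
  haveI : ∀ e : Edge n, IsProbabilityMeasure (edgeMeasure n L a b e) := by
    intro e
    unfold edgeMeasure
    split
    · exact colDist_prob ha hn hu
    · exact colDist_prob hb hn hv
  have hmp : MeasurePreserving (Tmap n L) (sbm n L a b) (sbm n L a b) := by
    have h := MeasureTheory.measurePreserving_piCongrLeft
      (fun e : Edge n => edgeMeasure n L a b e) (edgePerm n)
    have heq : (fun e : Edge n => edgeMeasure n L a b (edgePerm n e)) = edgeMeasure n L a b := by
      funext e
      exact edgeMeasure_flip n L a b e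
    rw [heq] at h
    exact h
  rw [← Tmap_preimage_FA (a := a) (b := b) M]
  exact hmp.measure_preimage (all_measurable _).nullMeasurableSet

end Symm


section SumEdge

lemma sum_edge (n : ℕ) (G : Fin (2*n) → Fin (2*n) → ℝ)
    (hsym : ∀ k m, G k m = G m k) (hdiag : ∀ k, G k k = 0) :
    2 * ∑ e : Edge n, G e.1.1 e.1.2 = ∑ k, ∑ m, G k m := by
  classical
  have hsub : ∑ e : Edge n, G e.1.1 e.1.2
      = ∑ p ∈ Finset.univ.filter (fun p : Fin (2*n) × Fin (2*n) => p.1 < p.2), G p.1 p.2 := by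
    exact (Finset.sum_subtype _ (by simp) fun p : Fin (2*n) × Fin (2*n) => G p.1 p.2).symm
  have htot : ∑ k, ∑ m, G k m = ∑ p : Fin (2*n) × Fin (2*n), G p.1 p.2 := by
    rw [Fintype.sum_prod_type]
  rw [hsub, htot,
    ← Finset.sum_filter_add_sum_filter_not Finset.univ (fun p : Fin (2*n) × Fin (2*n) => p.1 < p.2)]
  have hswap : ∑ p ∈ Finset.univ.filter (fun p : Fin (2*n) × Fin (2*n) => ¬ p.1 < p.2), G p.1 p.2
      = ∑ p ∈ Finset.univ.filter (fun p : Fin (2*n) × Fin (2*n) => ¬ p.2 < p.1), G p.2 p.1 := by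
    apply Finset.sum_nbij' (fun p => Prod.swap p) (fun p => Prod.swap p) <;> simp
  have hsplit : (Finset.univ.filter (fun p : Fin (2*n) × Fin (2*n) => ¬ p.2 < p.1))
      = (Finset.univ.filter (fun p : Fin (2*n) × Fin (2*n) => p.1 < p.2)) ∪
        (Finset.univ.filter (fun p : Fin (2*n) × Fin (2*n) => p.1 = p.2)) := by
    rw [← Finset.filter_or]
    apply Finset.filter_congr
    intro p _
    constructor
    · intro h; rcases lt_or_eq_of_le (le_of_not_gt h) with h' | h'
      · exact Or.inl h'
      · exact Or.inr h'
    · rintro (h | h)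
      · exact not_lt.mpr h.le
      · exact not_lt.mpr h.le
  have hdiag0 : ∑ p ∈ Finset.univ.filter (fun p : Fin (2*n) × Fin (2*n) => p.1 = p.2), G p.2 p.1
      = 0 := by
    apply Finset.sum_eq_zero; intro p hp
    simp only [Finset.mem_filter] at hp
    rw [hp.2, hdiag]
  have hdisj : Disjoint (Finset.univ.filter (fun p : Fin (2*n) × Fin (2*n) => p.1 < p.2))
      (Finset.univ.filter (fun p : Fin (2*n) × Fin (2*n) => p.1 = p.2)) := by
    rw [Finset.disjoint_filter]
    intro p _ h h'; exact absurd h' (ne_of_lt h)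
  rw [hswap, hsplit, Finset.sum_union hdisj, hdiag0, add_zero]
  have : ∑ p ∈ Finset.univ.filter (fun p : Fin (2*n) × Fin (2*n) => p.1 < p.2), G p.2 p.1
      = ∑ p ∈ Finset.univ.filter (fun p : Fin (2*n) × Fin (2*n) => p.1 < p.2), G p.1 p.2 := by
    apply Finset.sum_congr rfl; intro p _; exact hsym p.2 p.1
  rw [this]; ring

lemma sum_edge_local (n : ℕ) (G : Fin (2*n) → Fin (2*n) → ℝ) (i j : Fin (2*n)) (hij : i ≠ j)
    (hsym : ∀ k m, G k m = G m k) (hdiag : ∀ k, G k k = 0)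
    (hzero : ∀ k m, k ≠ i → k ≠ j → m ≠ i → m ≠ j → G k m = 0) (hGij : G i j = 0) :
    ∑ e : Edge n, G e.1.1 e.1.2 = (∑ m, G i m) + (∑ m, G j m) := by
  classical
  have key : ∑ k, ∑ m, G k m = 2 * ((∑ m, G i m) + (∑ m, G j m)) := by
    have hrow : ∀ k, k ≠ i → k ≠ j → ∑ m, G k m = G k i + G k j := by
      intro k hki hkj
      rw [← Finset.sum_subset (Finset.subset_univ ({i, j} : Finset (Fin (2*n))))
        (by intro m _ hm; simp only [Finset.mem_insert, Finset.mem_singleton, not_or] at hm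
            exact hzero k m hki hkj hm.1 hm.2),
        Finset.sum_pair hij]
    have hpart : ∀ f : Fin (2*n) → ℝ,
        ∑ k, f k = (∑ k ∈ Finset.univ \ ({i,j} : Finset (Fin (2*n))), f k) + (f i + f j) := by
      intro f
      rw [← Finset.sum_pair hij, Finset.sum_sdiff (Finset.subset_univ _)]
    rw [hpart (fun k => ∑ m, G k m)]
    have : ∑ k ∈ Finset.univ \ ({i,j} : Finset (Fin (2*n))), (∑ m, G k m)
        = ∑ k ∈ Finset.univ \ ({i,j} : Finset (Fin (2*n))), (G i k + G j k) := by
      apply Finset.sum_congr rfl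
      intro k hk
      simp only [Finset.mem_sdiff, Finset.mem_insert, Finset.mem_singleton, not_or] at hk
      rw [hrow k hk.2.1 hk.2.2, hsym k i, hsym k j]
    rw [this, Finset.sum_add_distrib]
    have h1 : ∑ k ∈ Finset.univ \ ({i,j} : Finset (Fin (2*n))), G i k
        = (∑ m, G i m) - (G i i + G i j) := by
      rw [eq_sub_iff_add_eq, ← Finset.sum_pair hij, Finset.sum_sdiff (Finset.subset_univ _)]
    have h2 : ∑ k ∈ Finset.univ \ ({i,j} : Finset (Fin (2*n))), G j k
        = (∑ m, G j m) - (G j i + G j j) := by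
      rw [eq_sub_iff_add_eq, ← Finset.sum_pair hij, Finset.sum_sdiff (Finset.subset_univ _)]
    have hji : G j i = 0 := by rw [hsym]; exact hGij
    rw [h1, h2, hdiag i, hdiag j, hGij, hji]
    ring
  have := sum_edge n G hsym hdiag
  linarith


end SumEdge


section Swap

variable {n L : ℕ} {a b : Fin L → ℝ}

lemma card_comA : (comA n).card = n := by
  have h : n ≤ 2 * n := by omega
  have : comA n = Finset.map (Fin.castLEEmb h) Finset.univ := by
    ext x
    simp only [comA, Finset.mem_filter, Finset.mem_univ, true_and, Finset.mem_map,
      Fin.castLEEmb, Function.Embedding.coeFn_mk]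
    constructor
    · intro hx
      exact ⟨⟨x.val, hx⟩, by apply Fin.ext; rfl⟩
    · rintro ⟨y, rfl⟩
      exact y.isLt
  rw [this, Finset.card_map, Finset.card_univ, Fintype.card_fin]

lemma d_eq (ha : ∀ ℓ, 0 < a ℓ) (hb : ∀ ℓ, 0 < b ℓ) (hn : 2 ≤ n)
    (hu : (∑ ℓ, a ℓ) * Real.log n < n) (hv : (∑ ℓ, b ℓ) * Real.log n < n) (ℓ : Fin (L + 1)) :
    d n L a b ℓ = Real.log (mass L a n ℓ) - Real.log (mass L b n ℓ) := by
  unfold d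
  rw [Real.log_div (mass_pos ha hn hu ℓ).ne' (mass_pos hb hn hv ℓ).ne']

lemma likelihood_eq (ha : ∀ ℓ, 0 < a ℓ) (hb : ∀ ℓ, 0 < b ℓ) (hn : 1 ≤ n)
    (hu : (∑ ℓ, a ℓ) * Real.log n < n) (hv : (∑ ℓ, b ℓ) * Real.log n < n)
    (w : Edge n → Fin (L + 1)) (σ : Fin (2 * n) → Bool) :
    likelihood n L a b σ w = ENNReal.ofReal
      (∏ e : Edge n, if σ e.1.1 = σ e.1.2 then mass L a n (w e) else mass L b n (w e)) := by
  unfold likelihood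
  rw [show (∏ e : Edge n, if σ e.1.1 = σ e.1.2 then ENNReal.ofReal (mass L a n (w e))
      else ENNReal.ofReal (mass L b n (w e)))
      = ∏ e : Edge n, ENNReal.ofReal (if σ e.1.1 = σ e.1.2 then mass L a n (w e)
      else mass L b n (w e)) from
    Finset.prod_congr rfl fun e _ => (apply_ite ENNReal.ofReal _ _ _).symm]
  rw [ENNReal.ofReal_prod_of_nonneg]
  intro e _
  split
  · exact mass_nonneg ha hn hu _
  · exact mass_nonneg hb hn hv _

lemma swap_mem_fail (ha : ∀ ℓ, 0 < a ℓ) (hb : ∀ ℓ, 0 < b ℓ) (hn : 2 ≤ n)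
    (hu : (∑ ℓ, a ℓ) * Real.log n < n) (hv : (∑ ℓ, b ℓ) * Real.log n < n)
    (M : ℝ) (hM : ∀ ℓ, d n L a b ℓ ≤ M) :
    eventFA n L a b M ∩ eventFB n L a b M ⊆ failEvent n L a b := by
  classical
  rintro w ⟨⟨i, hiA, hi⟩, ⟨j, hjB, hj⟩⟩
  have htri : truth n i = true := mem_comA.mp hiA
  have htrj : truth n j = false := mem_comB.mp hjB
  have hij : i ≠ j := fun h => by rw [h, htrj] at htri; exact Bool.false_ne_true htri
  set σ : Fin (2 * n) → Bool := fun k => if k = i then false else if k = j then true else truth n k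
    with hσ
  have hσi : σ i = false := by simp [hσ]
  have hσj : σ j = true := by simp [hσ, Ne.symm hij]
  have hσo : ∀ k, k ≠ i → k ≠ j → σ k = truth n k := by
    intro k h1 h2; simp [hσ, h1, h2]
  refine ⟨σ, ?_, ?_, ?_⟩
  · -- balanced
    unfold balanced
    have hfil : (Finset.univ.filter fun k => σ k = true) = insert j ((comA n).erase i) := by
      ext k
      simp only [Finset.mem_filter, Finset.mem_univ, true_and, Finset.mem_insert,
        Finset.mem_erase]
      by_cases h1 : k = i
      · subst h1
        simp [hσi, hij]
      · by_cases h2 : k = j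
        · subst h2
          simp [hσj]
        · rw [hσo k h1 h2]
          simp [h1, h2, mem_comA]
    rw [hfil, Finset.card_insert_of_notMem (fun hc => by
        have hj' := Finset.mem_of_mem_erase hc
        rw [mem_comA, htrj] at hj'
        exact Bool.false_ne_true hj'),
      Finset.card_erase_of_mem hiA, card_comA]
    omega
  · -- not equivTruth
    rintro (h | h)
    · have := congrFun h i
      rw [hσi, htri] at this
      exact Bool.false_ne_true this
    · have hcard : 0 < ((comA n).erase i).card := by
        rw [Finset.card_erase_of_mem hiA, card_comA]
        omega
      obtain ⟨k, hk⟩ := Finset.card_pos.mp hcard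
      have hki : k ≠ i := Finset.ne_of_mem_erase hk
      have hkA : k ∈ comA n := Finset.mem_of_mem_erase hk
      have hkj : k ≠ j := fun hc => by
        rw [hc] at hkA
        rw [mem_comA, htrj] at hkA
        exact Bool.false_ne_true hkA
      have := congrFun h k
      rw [hσo k hki hkj, mem_comA.mp hkA] at this
      simp [mem_comA.mp hkA] at this
  · -- likelihood comparison
    have hn1 : 1 ≤ n := by omega
    have hmA : ∀ ℓ, 0 < mass L a n ℓ := mass_pos ha hn hu
    have hmB : ∀ ℓ, 0 < mass L b n ℓ := mass_pos hb hn hv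
    have hfpos : ∀ (τ : Fin (2*n) → Bool) (e : Edge n),
        0 < (if τ e.1.1 = τ e.1.2 then mass L a n (w e) else mass L b n (w e)) := by
      intro τ e; split; exacts [hmA _, hmB _]
    rw [likelihood_eq ha hb hn1 hu hv, likelihood_eq ha hb hn1 hu hv]
    have hexp : ∀ τ : Fin (2*n) → Bool,
        (∏ e : Edge n, if τ e.1.1 = τ e.1.2 then mass L a n (w e) else mass L b n (w e))
        = Real.exp (∑ e : Edge n,
            Real.log (if τ e.1.1 = τ e.1.2 then mass L a n (w e) else mass L b n (w e))) := by
      intro τ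
      rw [Real.exp_sum]
      exact Finset.prod_congr rfl fun e _ => (Real.exp_log (hfpos τ e)).symm
    rw [hexp, hexp, ENNReal.ofReal_lt_ofReal_iff (Real.exp_pos _), Real.exp_lt_exp,
      ← sub_pos]
    set G : Fin (2*n) → Fin (2*n) → ℝ := fun k m =>
      (if σ k = σ m then Real.log (mass L a n (wfun w k m))
        else Real.log (mass L b n (wfun w k m)))
      - (if truth n k = truth n m then Real.log (mass L a n (wfun w k m))
        else Real.log (mass L b n (wfun w k m))) with hG
    have hdiff : (∑ e : Edge n,
          Real.log (if σ e.1.1 = σ e.1.2 then mass L a n (w e) else mass L b n (w e)))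
        - (∑ e : Edge n, Real.log
            (if truth n e.1.1 = truth n e.1.2 then mass L a n (w e) else mass L b n (w e)))
        = ∑ e : Edge n, G e.1.1 e.1.2 := by
      rw [← Finset.sum_sub_distrib]
      apply Finset.sum_congr rfl
      intro e _
      simp only [hG]
      rw [wfun_edge, apply_ite Real.log, apply_ite Real.log]
    have hsym : ∀ k m, G k m = G m k := by
      intro k m
      simp only [hG]
      rw [wfun_comm n L k m]
      congr 1
      · exact if_congr eq_comm rfl rfl
      · exact if_congr eq_comm rfl rfl
    have hdiag : ∀ k, G k k = 0 := by
      intro k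
      simp [hG]
    have hzero : ∀ k m, k ≠ i → k ≠ j → m ≠ i → m ≠ j → G k m = 0 := by
      intro k m hki hkj hmi hmj
      simp only [hG]
      rw [hσo k hki hkj, hσo m hmi hmj]
      exact sub_self _
    have hGij : G i j = 0 := by
      simp only [hG]
      rw [hσi, hσj, htri, htrj]
      simp
    have hlocal := sum_edge_local n G i j hij hsym hdiag hzero hGij
    have hiB : i ∉ comB n := fun hc => by
      rw [mem_comB, htri] at hc; simp at hc
    have hjA : j ∉ comA n := fun hc => by
      rw [mem_comA, htrj] at hc; exact Bool.false_ne_true hc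
    have hsplitrow : ∀ k, (∑ m ∈ comA n, G k m) + (∑ m ∈ comB n, G k m) = ∑ m, G k m := by
      intro k
      rw [comA, comB]
      exact Finset.sum_filter_add_sum_filter_not _ _ _
    -- row i
    have hiA' : ∑ m ∈ comA n, G i m = - S n L a b w i ((comA n).erase i) := by
      rw [← Finset.add_sum_erase _ (G i) hiA, hdiag i, zero_add]
      unfold S
      rw [Finset.erase_idem, ← Finset.sum_neg_distrib]
      apply Finset.sum_congr rfl
      intro m hm
      have hmi : m ≠ i := Finset.ne_of_mem_erase hm
      have hmA' : m ∈ comA n := Finset.mem_of_mem_erase hm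
      have hmj : m ≠ j := fun hc => hjA (hc ▸ hmA')
      simp only [hG]
      rw [hσi, hσo m hmi hmj, mem_comA.mp hmA', htri,
        d_eq ha hb hn hu hv]
      simp
    have hiB' : ∑ m ∈ comB n, G i m
        = S n L a b w i (comB n) - d n L a b (wfun w i j) := by
      rw [← Finset.add_sum_erase _ (G i) hjB, hGij, zero_add]
      have hS : S n L a b w i (comB n)
          = d n L a b (wfun w i j) + ∑ m ∈ (comB n).erase j, d n L a b (wfun w i m) := by
        unfold S
        rw [Finset.erase_eq_of_notMem hiB, ← Finset.add_sum_erase _ _ hjB]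
      rw [hS]
      have : ∑ m ∈ (comB n).erase j, G i m
          = ∑ m ∈ (comB n).erase j, d n L a b (wfun w i m) := by
        apply Finset.sum_congr rfl
        intro m hm
        have hmj : m ≠ j := Finset.ne_of_mem_erase hm
        have hmB' : m ∈ comB n := Finset.mem_of_mem_erase hm
        have hmi : m ≠ i := fun hc => hiB (hc ▸ hmB')
        simp only [hG]
        rw [hσi, hσo m hmi hmj, mem_comB.mp hmB', htri, d_eq ha hb hn hu hv]
        simp
      rw [this]
      ring
    -- row j
    have hjA' : ∑ m ∈ comA n, G j m
        = S n L a b w j (comA n) - d n L a b (wfun w i j) := by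
      rw [← Finset.add_sum_erase _ (G j) hiA, hsym j i, hGij, zero_add]
      have hS : S n L a b w j (comA n)
          = d n L a b (wfun w j i) + ∑ m ∈ (comA n).erase i, d n L a b (wfun w j m) := by
        unfold S
        rw [Finset.erase_eq_of_notMem hjA, ← Finset.add_sum_erase _ _ hiA]
      rw [hS, wfun_comm n L j i]
      have : ∑ m ∈ (comA n).erase i, G j m
          = ∑ m ∈ (comA n).erase i, d n L a b (wfun w j m) := by
        apply Finset.sum_congr rfl
        intro m hm
        have hmi : m ≠ i := Finset.ne_of_mem_erase hm
        have hmA' : m ∈ comA n := Finset.mem_of_mem_erase hm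
        have hmj : m ≠ j := fun hc => hjA (hc ▸ hmA')
        simp only [hG]
        rw [hσj, hσo m hmi hmj, mem_comA.mp hmA', htrj, d_eq ha hb hn hu hv]
        simp
      rw [this]
      ring
    have hjB' : ∑ m ∈ comB n, G j m = - S n L a b w j ((comB n).erase j) := by
      rw [← Finset.add_sum_erase _ (G j) hjB, hdiag j, zero_add]
      unfold S
      rw [Finset.erase_idem, ← Finset.sum_neg_distrib]
      apply Finset.sum_congr rfl
      intro m hm
      have hmj : m ≠ j := Finset.ne_of_mem_erase hm
      have hmB' : m ∈ comB n := Finset.mem_of_mem_erase hm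
      have hmi : m ≠ i := fun hc => hiB (hc ▸ hmB')
      simp only [hG]
      rw [hσj, hσo m hmi hmj, mem_comB.mp hmB', htrj, d_eq ha hb hn hu hv]
      simp
    rw [hdiff, hlocal, ← hsplitrow i, ← hsplitrow j, hiA', hiB', hjA', hjB']
    have hMij := hM (wfun w i j)
    linarith

end Swap


section Final

variable {n L : ℕ} {a b : Fin L → ℝ}

lemma card_comB : (comB n).card = n := by
  have h := Finset.card_filter_add_card_filter_not
    (s := (Finset.univ : Finset (Fin (2 * n)))) (p := fun i => i.val < n)
  have hA : (comA n).card = n := card_comA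
  rw [comB]
  rw [comA] at hA
  simp only [Finset.card_univ, Fintype.card_fin] at h
  omega

lemma FA_empty_of_one (a b : Fin L → ℝ) (M : ℝ) (hM : ∀ ℓ, d 1 L a b ℓ ≤ M) :
    eventFA 1 L a b M = ∅ := by
  ext w
  simp only [eventFA, Set.mem_setOf_eq, Set.mem_empty_iff_false, iff_false, not_exists]
  rintro i ⟨hi, hlt⟩
  have hi1 : i.val < 1 := by
    have := mem_comA.mp hi
    simpa [truth] using this
  have hzero : S 1 L a b w i ((comA 1).erase i) = 0 := by
    unfold S
    rw [Finset.erase_idem]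
    have : (comA 1).erase i = ∅ := by
      apply Finset.eq_empty_iff_forall_notMem.mpr
      intro k hk
      have hki : k ≠ i := Finset.ne_of_mem_erase hk
      have hk1 : k.val < 1 := by
        have := mem_comA.mp (Finset.mem_of_mem_erase hk)
        simpa [truth] using this
      exact hki (Fin.ext (by omega))
    rw [this, Finset.sum_empty]
  have hiB : i ∉ comB 1 := by
    rw [mem_comB]
    simp [truth, hi1]
  have hSB : S 1 L a b w i (comB 1) ≤ M := by
    unfold S
    rw [Finset.erase_eq_of_notMem hiB]
    calc ∑ m ∈ comB 1, d 1 L a b (wfun w i m) ≤ (comB 1).card • M :=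
          Finset.sum_le_card_nsmul _ _ M fun m _ => hM _
      _ = M := by rw [card_comB]; simp
  rw [hzero] at hlt
  linarith

end Final

theorem statement14 (n L : ℕ) (hL : 1 ≤ L) (a b : Fin L → ℝ)
    (ha : ∀ ℓ, 0 < a ℓ) (hb : ∀ ℓ, 0 < b ℓ)
    (hu : (∑ ℓ, a ℓ) * Real.log n < n) (hv : (∑ ℓ, b ℓ) * Real.log n < n)
    (M : ℝ) (hM : ∀ ℓ, d n L a b ℓ ≤ M)
    (hFA : 2 / 3 ≤ (sbm n L a b (eventFA n L a b M)).toReal) :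
    1 / 3 ≤ (sbm n L a b (failEvent n L a b)).toReal := by
  classical
  have hn1 : 1 ≤ n := by
    rcases Nat.eq_zero_or_pos n with h | h
    · subst h
      simp [Real.log_zero] at hu
    · exact h
  haveI hP : IsProbabilityMeasure (sbm n L a b) := sbm_prob ha hb hn1 hu hv
  by_cases hn2 : 2 ≤ n
  · -- main case
    have hFBeq : sbm n L a b (eventFB n L a b M) = sbm n L a b (eventFA n L a b M) :=
      measure_FB_eq_FA ha hb hn1 hu hv M
    have hsub := swap_mem_fail ha hb hn2 hu hv M hM
    have hmono : sbm n L a b (eventFA n L a b M ∩ eventFB n L a b M)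
        ≤ sbm n L a b (failEvent n L a b) := measure_mono hsub
    have hkey : sbm n L a b (eventFA n L a b M) + sbm n L a b (eventFB n L a b M)
        ≤ 1 + sbm n L a b (eventFA n L a b M ∩ eventFB n L a b M) := by
      rw [← measure_union_add_inter _ (all_measurable _)]
      exact add_le_add (prob_le_one (μ := sbm n L a b)) le_rfl
    have hfin : ∀ s : Set (Edge n → Fin (L + 1)), sbm n L a b s ≠ ⊤ :=
      fun s => measure_ne_top _ s
    have hkey' : (sbm n L a b (eventFA n L a b M)).toReal
        + (sbm n L a b (eventFB n L a b M)).toReal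
        ≤ 1 + (sbm n L a b (eventFA n L a b M ∩ eventFB n L a b M)).toReal := by
      have h1 := ENNReal.toReal_mono (by
          rw [ENNReal.add_ne_top]
          exact ⟨ENNReal.one_ne_top, hfin _⟩) hkey
      rw [ENNReal.toReal_add (hfin _) (hfin _), ENNReal.toReal_add ENNReal.one_ne_top (hfin _),
        ENNReal.toReal_one] at h1
      exact h1
    have hmono' : (sbm n L a b (eventFA n L a b M ∩ eventFB n L a b M)).toReal
        ≤ (sbm n L a b (failEvent n L a b)).toReal :=
      ENNReal.toReal_mono (hfin _) hmono
    have hFB : (2:ℝ) / 3 ≤ (sbm n L a b (eventFB n L a b M)).toReal := by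
      rw [hFBeq]; exact hFA
    linarith
  · -- n = 1
    have hone : n = 1 := by omega
    subst hone
    rw [FA_empty_of_one a b M hM] at hFA
    simp at hFA
    norm_num at hFA


end SBM14
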